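/- Let K be a field, q ∈ K[x_1] nonconstant, and R_q = K[x_1]/⟨q⟩ with lift ι_q to representatives of degree < deg q. For any finite set F = {f_1,...,f_s} ⊂ R_q[x_2,...,x_n] of polynomials not in R_q and any f ∈ R_q[x_2,...,x_n], there exist a unit λ ∈ R_q^×, quotients q_1,...,q_s ∈ R_q[x_2,...,x_n] and a remainder r ∈ R_q[x_2,...,x_n] such that λ·f = Σ_{j=1}^s q_j·f_j + r, r is properly reduced with respect to F, and lm(f) = max{ max_j lm(q_j)·lm(f_j), lm(r) }. -/

import Mathlib

open scoped Classical

open MvPolynomial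

/-- The leading monomial (exponent) of `f` with respect to the monomial order `m`,
taken over the coefficient ring. -/
noncomputable def mdeg {σ : Type*} (m : MonomialOrder σ) {R : Type*} [CommSemiring R]
    (f : MvPolynomial σ R) : σ →₀ ℕ :=
  m.toSyn.symm (f.support.sup fun d => m.toSyn d)

/-- The leading coefficient of `f` with respect to the monomial order `m`. -/
noncomputable def lC {σ : Type*} (m : MonomialOrder σ) {R : Type*} [CommSemiring R]
    (f : MvPolynomial σ R) : R :=
  f.coeff (mdeg m f)

/-- The leading term of `f` with respect to the monomial order `m`. -/
noncomputable def lT {σ : Type*} (m : MonomialOrder σ) {R : Type*} [CommSemiring R]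
    (f : MvPolynomial σ R) : MvPolynomial σ R :=
  monomial (mdeg m f) (lC m f)

/-- `d` is a greatest common divisor of `a` and `b` (gcd's are unique up to units). -/
def IsGcd {α : Type*} [CommMonoid α] (d a b : α) : Prop :=
  d ∣ a ∧ d ∣ b ∧ ∀ e, e ∣ a → e ∣ b → e ∣ d

/-- `l` is a least common multiple of `a` and `b` (lcm's are unique up to units). -/
def IsLcm {α : Type*} [CommMonoid α] (l a b : α) : Prop :=
  a ∣ l ∧ b ∣ l ∧ ∀ e, a ∣ e → b ∣ e → l ∣ e

section DivisionAux

variable {σ : Type*} {m : MonomialOrder σ} {R : Type*} [CommRing R]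

lemma toSyn_mdeg (f : MvPolynomial σ R) :
    m.toSyn (mdeg m f) = f.support.sup fun d => m.toSyn d :=
  m.toSyn.apply_symm_apply _

lemma le_toSyn_mdeg {f : MvPolynomial σ R} {d : σ →₀ ℕ} (hd : d ∈ f.support) :
    m.toSyn d ≤ m.toSyn (mdeg m f) := by
  rw [toSyn_mdeg]; exact Finset.le_sup hd

lemma toSyn_mdeg_le_iff {f : MvPolynomial σ R} {b : m.syn} :
    m.toSyn (mdeg m f) ≤ b ↔ ∀ d ∈ f.support, m.toSyn d ≤ b := by
  rw [toSyn_mdeg]; exact Finset.sup_le_iff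

lemma coeff_eq_zero_of_mdeg_lt {f : MvPolynomial σ R} {d : σ →₀ ℕ}
    (h : m.toSyn (mdeg m f) < m.toSyn d) : f.coeff d = 0 := by
  by_contra hc
  exact absurd (le_toSyn_mdeg (by simpa [mem_support_iff] using hc)) (not_le.mpr h)

lemma mdeg_mem_support {f : MvPolynomial σ R} (hf : f ≠ 0) : mdeg m f ∈ f.support := by
  obtain ⟨d, hd, hsup⟩ := Finset.exists_mem_eq_sup f.support
    (by simpa using hf) (fun d => m.toSyn d)
  have : mdeg m f = d := by simp [mdeg, hsup]
  rwa [this]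

lemma lC_ne_zero {f : MvPolynomial σ R} (hf : f ≠ 0) : lC m f ≠ 0 := by
  have := mdeg_mem_support (m := m) hf
  simpa [lC, mem_support_iff] using this

@[simp] lemma mdeg_zero : mdeg m (0 : MvPolynomial σ R) = 0 := by
  simp [mdeg]

lemma toSyn_mdeg_monomial_le (e : σ →₀ ℕ) (t : R) :
    m.toSyn (mdeg m (monomial e t)) ≤ m.toSyn e := by
  rw [toSyn_mdeg_le_iff]
  intro d hd
  have := support_monomial_subset hd
  simp only [Finset.mem_singleton] at this
  exact le_of_eq (by rw [this])

lemma toSyn_mdeg_mul_le (p f : MvPolynomial σ R) :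
    m.toSyn (mdeg m (p * f)) ≤ m.toSyn (mdeg m p) + m.toSyn (mdeg m f) := by
  classical
  rw [toSyn_mdeg_le_iff]
  intro d hd
  obtain ⟨a, ha, b, hb, rfl⟩ := Finset.mem_add.mp (support_mul p f hd)
  rw [map_add]
  exact add_le_add (le_toSyn_mdeg ha) (le_toSyn_mdeg hb)

lemma toSyn_mdeg_add_le (p f : MvPolynomial σ R) :
    m.toSyn (mdeg m (p + f)) ≤ m.toSyn (mdeg m p) ⊔ m.toSyn (mdeg m f) := by
  classical
  rw [toSyn_mdeg_le_iff]
  intro d hd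
  rcases Finset.mem_union.mp (MvPolynomial.support_add hd) with h | h
  · exact le_sup_of_le_left (le_toSyn_mdeg h)
  · exact le_sup_of_le_right (le_toSyn_mdeg h)

/-- Division with remainder where reduction is performed whenever the leading
coefficient of a divisor divides the coefficient of a divisible monomial. -/
lemma division_aux {s : ℕ} (F : Fin s → MvPolynomial σ R) (f : MvPolynomial σ R) :
    ∃ (qs : Fin s → MvPolynomial σ R) (r : MvPolynomial σ R),
      f = (∑ j, qs j * F j) + r ∧
      (∀ j, qs j ≠ 0 → m.toSyn (mdeg m (qs j) + mdeg m (F j)) ≤ m.toSyn (mdeg m f)) ∧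
      m.toSyn (mdeg m r) ≤ m.toSyn (mdeg m f) ∧
      (∀ d ∈ r.support, ∀ j, mdeg m (F j) ≤ d → ¬ (lC m (F j) ∣ r.coeff d)) := by
  classical
  suffices H : ∀ a : m.syn, ∀ f : MvPolynomial σ R, m.toSyn (mdeg m f) = a →
      ∃ (qs : Fin s → MvPolynomial σ R) (r : MvPolynomial σ R),
      f = (∑ j, qs j * F j) + r ∧
      (∀ j, qs j ≠ 0 → m.toSyn (mdeg m (qs j) + mdeg m (F j)) ≤ m.toSyn (mdeg m f)) ∧
      m.toSyn (mdeg m r) ≤ m.toSyn (mdeg m f) ∧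
      (∀ d ∈ r.support, ∀ j, mdeg m (F j) ≤ d → ¬ (lC m (F j) ∣ r.coeff d)) by
    exact H _ f rfl
  intro a
  induction a using WellFoundedLT.induction with
  | _ a ih =>
  intro f hfa
  by_cases hf0 : f = 0
  · exact ⟨0, 0, by simp [hf0], by simp, by simp [hf0], by simp⟩
  have key : ∀ g : MvPolynomial σ R,
      (∀ d ∈ g.support, m.toSyn d ≤ m.toSyn (mdeg m f)) →
      g.coeff (mdeg m f) = 0 → g ≠ 0 →
      m.toSyn (mdeg m g) < m.toSyn (mdeg m f) := by
    intro g hgle hgc hg0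
    have hle : m.toSyn (mdeg m g) ≤ m.toSyn (mdeg m f) := toSyn_mdeg_le_iff.mpr hgle
    refine lt_of_le_of_ne hle ?_
    intro heq
    have hmm : mdeg m g = mdeg m f := m.toSyn.injective heq
    have hmem := mdeg_mem_support (m := m) hg0
    rw [hmm, mem_support_iff, hgc] at hmem
    exact hmem rfl
  have getP : ∀ g : MvPolynomial σ R,
      (∀ d ∈ g.support, m.toSyn d ≤ m.toSyn (mdeg m f)) →
      g.coeff (mdeg m f) = 0 →
      ∃ (qs : Fin s → MvPolynomial σ R) (r : MvPolynomial σ R),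
      g = (∑ j, qs j * F j) + r ∧
      (∀ j, qs j ≠ 0 → m.toSyn (mdeg m (qs j) + mdeg m (F j)) ≤ m.toSyn (mdeg m g)) ∧
      m.toSyn (mdeg m r) ≤ m.toSyn (mdeg m g) ∧
      (∀ d ∈ r.support, ∀ j, mdeg m (F j) ≤ d → ¬ (lC m (F j) ∣ r.coeff d)) ∧
      (g = 0 → r = 0) := by
    intro g hgle hgc
    by_cases hg0 : g = 0
    · exact ⟨0, 0, by simp [hg0], by simp, by simp [hg0], by simp, fun _ => rfl⟩
    · obtain ⟨qs, r, h1, h2, h3, h4⟩ := ih _ (hfa ▸ key g hgle hgc hg0) g rfl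
      exact ⟨qs, r, h1, h2, h3, h4, fun h => absurd h hg0⟩
  by_cases hred : ∃ j, mdeg m (F j) ≤ mdeg m f ∧ lC m (F j) ∣ lC m f
  · -- the leading term is reducible
    obtain ⟨j, hjle, t, ht⟩ := hred
    set e : σ →₀ ℕ := mdeg m f - mdeg m (F j) with he
    have hee : e + mdeg m (F j) = mdeg m f := tsub_add_cancel_of_le hjle
    set g : MvPolynomial σ R := f - monomial e t * F j with hgdef
    have hcoeff_mon : (monomial e t * F j).coeff (mdeg m f) = lC m f := by
      rw [← hee, coeff_monomial_mul, ht]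
      exact mul_comm _ _
    have hmonle : m.toSyn (mdeg m (monomial e t * F j)) ≤ m.toSyn (mdeg m f) := by
      refine le_trans (toSyn_mdeg_mul_le _ _) ?_
      calc m.toSyn (mdeg m (monomial e t)) + m.toSyn (mdeg m (F j))
          ≤ m.toSyn e + m.toSyn (mdeg m (F j)) :=
            add_le_add_left (toSyn_mdeg_monomial_le e t) _
        _ = m.toSyn (mdeg m f) := by rw [← map_add, hee]
    have hgle : ∀ d ∈ g.support, m.toSyn d ≤ m.toSyn (mdeg m f) := by
      intro d hd
      rcases Finset.mem_union.mp (MvPolynomial.support_sub σ _ _ hd) with h | h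
      · exact le_toSyn_mdeg h
      · exact le_trans (le_toSyn_mdeg h) hmonle
    have hgc : g.coeff (mdeg m f) = 0 := by
      rw [hgdef, coeff_sub, hcoeff_mon]
      simp [lC]
    obtain ⟨qs', r', hsum', hq', hr', hred', -⟩ := getP g hgle hgc
    have hgf : m.toSyn (mdeg m g) ≤ m.toSyn (mdeg m f) := toSyn_mdeg_le_iff.mpr hgle
    refine ⟨fun j' => qs' j' + (if j' = j then monomial e t else 0), r', ?_, ?_,
      le_trans hr' hgf, hred'⟩
    · have hsingle : (∑ j', (if j' = j then (monomial e t : MvPolynomial σ R) else 0) * F j')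
          = monomial e t * F j := by
        rw [Finset.sum_eq_single j]
        · simp
        · intro b _ hb; simp [hb]
        · simp
      have hsplit : (∑ j', (qs' j' + (if j' = j then monomial e t else 0)) * F j')
          = (∑ j', qs' j' * F j') + monomial e t * F j := by
        rw [← hsingle, ← Finset.sum_add_distrib]
        exact Finset.sum_congr rfl fun j' _ => add_mul _ _ _
      rw [hgdef] at hsum'
      rw [hsplit]
      linear_combination hsum'
    · intro j' hj'
      by_cases hjj : j' = j
      · subst hjj
        simp only [if_pos rfl] at hj' ⊢
        rw [map_add]
        have h1 : m.toSyn (mdeg m (qs' j' + monomial e t)) ≤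
            m.toSyn (mdeg m (qs' j')) ⊔ m.toSyn e :=
          le_trans (toSyn_mdeg_add_le _ _)
            (sup_le_sup (le_refl _) (toSyn_mdeg_monomial_le e t))
        rcases le_sup_iff.mp h1 with h | h
        · by_cases hq0 : qs' j' = 0
          · have hmon : m.toSyn (mdeg m (qs' j' + monomial e t)) ≤ m.toSyn e := by
              simpa [hq0] using toSyn_mdeg_monomial_le (m := m) e t
            calc m.toSyn (mdeg m (qs' j' + monomial e t)) + m.toSyn (mdeg m (F j'))
                ≤ m.toSyn e + m.toSyn (mdeg m (F j')) := add_le_add_left hmon _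
              _ = m.toSyn (mdeg m f) := by rw [← map_add, hee]
          · have hb := hq' j' hq0
            rw [map_add] at hb
            exact le_trans (add_le_add_left h _) (le_trans hb hgf)
        · calc m.toSyn (mdeg m (qs' j' + monomial e t)) + m.toSyn (mdeg m (F j'))
              ≤ m.toSyn e + m.toSyn (mdeg m (F j')) := add_le_add_left h _
            _ = m.toSyn (mdeg m f) := by rw [← map_add, hee]
      · simp only [if_neg hjj, add_zero] at hj' ⊢
        exact le_trans (hq' j' hj') hgf
  · -- the leading term goes to the remainder
    push_neg at hred
    set g : MvPolynomial σ R := f - lT m f with hgdef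
    have hltle : m.toSyn (mdeg m (lT m f)) ≤ m.toSyn (mdeg m f) :=
      toSyn_mdeg_monomial_le _ _
    have hgle : ∀ d ∈ g.support, m.toSyn d ≤ m.toSyn (mdeg m f) := by
      intro d hd
      rcases Finset.mem_union.mp (MvPolynomial.support_sub σ _ _ hd) with h | h
      · exact le_toSyn_mdeg h
      · exact le_trans (le_toSyn_mdeg h) hltle
    have hgc : g.coeff (mdeg m f) = 0 := by
      simp [hgdef, lT, coeff_monomial, lC]
    obtain ⟨qs', r', hsum', hq', hr', hred', hzero⟩ := getP g hgle hgc
    have hgf : m.toSyn (mdeg m g) ≤ m.toSyn (mdeg m f) := toSyn_mdeg_le_iff.mpr hgle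
    have hr'c : r'.coeff (mdeg m f) = 0 := by
      by_cases hg0 : g = 0
      · simp [hzero hg0]
      · exact coeff_eq_zero_of_mdeg_lt (lt_of_le_of_lt hr' (key g hgle hgc hg0))
    refine ⟨qs', r' + lT m f, ?_, fun j hj => le_trans (hq' j hj) hgf, ?_, ?_⟩
    · rw [hgdef] at hsum'
      linear_combination hsum'
    · exact le_trans (toSyn_mdeg_add_le _ _) (sup_le (le_trans hr' hgf) hltle)
    · intro d hd j hjd
      by_cases hdf : d = mdeg m f
      · subst hdf
        have hcd : (r' + lT m f).coeff (mdeg m f) = lC m f := by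
          simp [coeff_add, hr'c, lT, coeff_monomial]
        rw [hcd]
        exact hred j hjd
      · have hlt0 : (lT m f).coeff d = 0 := by
          simp [lT, coeff_monomial, Ne.symm hdf]
        have hc : (r' + lT m f).coeff d = r'.coeff d := by simp [coeff_add, hlt0]
        rw [hc]
        refine hred' d ?_ j hjd
        rw [mem_support_iff] at hd ⊢
        rwa [hc] at hd

end DivisionAux

/-- **Proper division over a PQR `R_q = K[x₁]/⟨q⟩`.**  For a finite family
`F = {f_1, …, f_s}` of polynomials not in `R_q` and any `f`, there exist a unit
`λ ∈ R_q^×`, quotients `q_j` and a remainder `r` with `λ·f = ∑ q_j·f_j + r`, where `r`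
is properly reduced with respect to `F` (no term of `r` is properly reducible: whenever
its monomial is divisible by some `lm f_j`, the interim multiplier
`σ_q(lcm(ι c, ι(lc f_j))/ι c)` is not a unit), and
`lm f = max{max_j lm(q_j)·lm(f_j), lm r}` (terms with `q_j = 0` omitted). -/
theorem proper_division_PQR {σ K : Type*} [Field K] (mo : MonomialOrder σ)
    (q : Polynomial K) (hq : 0 < q.degree)
    (iota : (Polynomial K ⧸ Ideal.span {q}) → Polynomial K)
    (hiota : ∀ a, (iota a).degree < q.degree ∧
      Ideal.Quotient.mk (Ideal.span {q}) (iota a) = a)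
    (s : ℕ) (F : Fin s → MvPolynomial σ (Polynomial K ⧸ Ideal.span {q}))
    (hF : ∀ j, F j ∉ Set.range (C : (Polynomial K ⧸ Ideal.span {q}) →
      MvPolynomial σ (Polynomial K ⧸ Ideal.span {q})))
    (f : MvPolynomial σ (Polynomial K ⧸ Ideal.span {q})) :
    ∃ (lam : Polynomial K ⧸ Ideal.span {q})
      (qs : Fin s → MvPolynomial σ (Polynomial K ⧸ Ideal.span {q}))
      (r : MvPolynomial σ (Polynomial K ⧸ Ideal.span {q})),
      IsUnit lam ∧
      C lam * f = (∑ j, qs j * F j) + r ∧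
      (∀ d ∈ r.support, ∀ j, mdeg mo (F j) ≤ d →
        ∀ L u : Polynomial K, IsLcm L (iota (r.coeff d)) (iota (lC mo (F j))) →
          L = iota (r.coeff d) * u →
          ¬ IsUnit (Ideal.Quotient.mk (Ideal.span {q}) u)) ∧
      mo.toSyn (mdeg mo f) =
        ((Finset.univ.filter fun j => qs j ≠ 0).sup fun j =>
            mo.toSyn (mdeg mo (qs j) + mdeg mo (F j))) ⊔ mo.toSyn (mdeg mo r) := by
  classical
  obtain ⟨qs, r, hsum, hq', hr', hred⟩ := division_aux (m := mo) F f
  refine ⟨1, qs, r, isUnit_one, by rw [map_one, one_mul]; exact hsum, ?_, ?_⟩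
  · -- proper reducedness
    intro d hd j hjd L u hlcm hLu hu
    -- from `IsUnit (mk u)` deduce `lC mo (F j) ∣ r.coeff d`, contradiction
    apply hred d hd j hjd
    obtain ⟨w, hw⟩ := hlcm.2.1
    rw [hLu] at hw
    have := congrArg (Ideal.Quotient.mk (Ideal.span {q})) hw
    rw [map_mul, map_mul, (hiota _).2, (hiota _).2] at this
    have hdvd : lC mo (F j) ∣ r.coeff d * Ideal.Quotient.mk (Ideal.span {q}) u :=
      ⟨Ideal.Quotient.mk (Ideal.span {q}) w, this⟩
    exact (IsUnit.dvd_mul_right hu).mp hdvd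
  · -- the degree identity
    apply le_antisymm
    · by_cases hf0 : f = 0
      · rw [hf0]
        simp only [mdeg_zero, map_zero]
        rw [← mo.bot_eq_zero]
        exact bot_le
      · have hcf : f.coeff (mdeg mo f) ≠ 0 := by
          have := mdeg_mem_support (m := mo) hf0
          rwa [mem_support_iff] at this
        by_cases hrc : r.coeff (mdeg mo f) ≠ 0
        · exact le_sup_of_le_right (le_toSyn_mdeg (by rwa [mem_support_iff]))
        · push_neg at hrc
          set d0 := mdeg mo f with hd0
          have hex : ∃ j, (qs j * F j).coeff d0 ≠ 0 := by
            by_contra hall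
            push_neg at hall
            apply hcf
            rw [hsum, coeff_add, hrc, add_zero, MvPolynomial.coeff_sum]
            exact Finset.sum_eq_zero fun j _ => hall j
          obtain ⟨j, hj⟩ := hex
          have hqj : qs j ≠ 0 := by
            intro h; rw [h, zero_mul] at hj; exact hj (by simp)
          have h1 : mo.toSyn (mdeg mo f) ≤ mo.toSyn (mdeg mo (qs j * F j)) :=
            le_toSyn_mdeg (by rwa [mem_support_iff])
          have h2 : mo.toSyn (mdeg mo (qs j * F j)) ≤
              mo.toSyn (mdeg mo (qs j) + mdeg mo (F j)) := by
            rw [map_add]; exact toSyn_mdeg_mul_le _ _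
          refine le_sup_of_le_left (le_trans (le_trans h1 h2) ?_)
          exact Finset.le_sup (f := fun j => mo.toSyn (mdeg mo (qs j) + mdeg mo (F j)))
            (Finset.mem_filter.mpr ⟨Finset.mem_univ j, hqj⟩)
    · apply sup_le
      · apply Finset.sup_le
        intro j hj
        rw [Finset.mem_filter] at hj
        exact hq' j hj.2
      · exact hr'
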